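/- Let k be an algebraically closed field of characteristic p > 0, let e ≥ 1 and m = p^e, and assume m > 2. Let a, b, c₁, c₂ ∈ k with (a, b) ≠ (0, 0) and a·c₁ + b·c₂ = 1. For t ∈ k define the one-variable polynomial f_t ∈ k[s] by f_t(s) = (c₁·t − b·s)^{m−1} · (c₂·t + a·s) (the restriction of the two-variable polynomial x^{m−1}y to the parametrized line x = c₁t − bs, y = c₂t + as, which lies in the fiber {ax + by = t}). Then the Artin–Schreier-reduced degrees at t = 0 and t = 1 differ: sInf { natDegree(f_0 + h^p − h) : h ∈ k[s] } ≠ sInf { natDegree(f_1 + h^p − h) : h ∈ k[s] }. -/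

import Mathlib

open Polynomial Finset

noncomputable def asDeg {k : Type*} [Field k] (p : ℕ) (f : Polynomial k) : ℕ :=
  sInf { N | ∃ h : Polynomial k, (f + h ^ p - h).natDegree = N }

section Aux
variable {k : Type*} [Field k] (p : ℕ) [Fact p.Prime] [CharP k p]

omit [CharP k p] in
lemma natDegree_le_rep (f : Polynomial k) (hd : ¬ p ∣ f.natDegree) (h : Polynomial k) :
    f.natDegree ≤ (f + h ^ p - h).natDegree := by
  have hp : p.Prime := Fact.out
  have hfd : 1 ≤ f.natDegree := by
    rcases Nat.eq_zero_or_pos f.natDegree with h0 | h0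
    · exact absurd (h0 ▸ dvd_zero p) hd
    · exact h0
  have hrw : f + h ^ p - h = f + (h ^ p - h) := by ring
  rw [hrw]
  rcases Nat.eq_zero_or_pos h.natDegree with h0 | h0
  · obtain ⟨c, rfl⟩ := natDegree_eq_zero.mp h0
    have : (C c : Polynomial k) ^ p - C c = C (c ^ p - c) := by
      rw [map_sub, map_pow]
    rw [this, natDegree_add_C]
  · have hpow : (h ^ p).natDegree = p * h.natDegree := by
      rw [natDegree_pow]
    have hlt : h.natDegree < (h ^ p).natDegree := by
      rw [hpow]
      calc h.natDegree = 1 * h.natDegree := (one_mul _).symm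
      _ < p * h.natDegree := (Nat.mul_lt_mul_right h0).mpr hp.one_lt
    have hsub : (h ^ p - h).natDegree = p * h.natDegree := by
      rw [natDegree_sub_eq_left_of_natDegree_lt hlt, hpow]
    rcases lt_trichotomy (p * h.natDegree) f.natDegree with hc | hc | hc
    · rw [natDegree_add_eq_left_of_natDegree_lt (by rw [hsub]; exact hc)]
    · exact absurd (hc ▸ Dvd.intro _ rfl) hd
    · rw [natDegree_add_eq_right_of_natDegree_lt (by rw [hsub]; exact hc), hsub]
      exact hc.le

omit [CharP k p] in
lemma asDeg_eq_natDegree (f : Polynomial k) (hd : ¬ p ∣ f.natDegree) :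
    asDeg p f = f.natDegree := by
  have hp : p.Prime := Fact.out
  apply le_antisymm
  · apply Nat.sInf_le
    exact ⟨0, by rw [zero_pow hp.ne_zero, add_zero, sub_zero]⟩
  · refine le_csInf ⟨f.natDegree, ⟨0, ?_⟩⟩ ?_
    · rw [zero_pow hp.ne_zero, add_zero, sub_zero]
    · rintro N ⟨h, rfl⟩
      exact natDegree_le_rep p f hd h

lemma asDeg_add_artinSchreier (f h₀ : Polynomial k) :
    asDeg p (f + h₀ ^ p - h₀) = asDeg p f := by
  unfold asDeg
  congr 1
  ext N
  constructor
  · rintro ⟨h, rfl⟩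
    refine ⟨h₀ + h, ?_⟩
    rw [add_pow_char]
    congr 1
    ring
  · rintro ⟨h, rfl⟩
    refine ⟨h - h₀, ?_⟩
    rw [sub_pow_char]
    congr 1
    ring

lemma artinSchreier_telescope (g : Polynomial k) (e : ℕ) :
    (-(∑ j ∈ range e, g ^ p ^ j)) ^ p - (-(∑ j ∈ range e, g ^ p ^ j))
      = g ^ p ^ 0 - g ^ p ^ e := by
  have hneg : (-(∑ j ∈ range e, g ^ p ^ j)) ^ p = -((∑ j ∈ range e, g ^ p ^ j) ^ p) := by
    rw [show (-(∑ j ∈ range e, g ^ p ^ j)) = (-1) * (∑ j ∈ range e, g ^ p ^ j) by ring,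
      mul_pow, neg_one_pow_char, neg_one_mul]
  rw [hneg, sum_pow_char]
  have : ∀ j, (g ^ p ^ j) ^ p = g ^ p ^ (j + 1) := by
    intro j; rw [← pow_mul, ← pow_succ]
  simp_rw [this]
  rw [sub_neg_eq_add, neg_add_eq_sub, ← Finset.sum_sub_distrib, Finset.sum_range_sub']

end Aux

theorem asDeg_fiber_zero_ne_asDeg_fiber_one
    (p : ℕ) [Fact p.Prime] (k : Type*) [Field k] [IsAlgClosed k] [CharP k p]
    (e m : ℕ) (he : 1 ≤ e) (hm : m = p ^ e) (hm2 : 2 < m)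
    (a b c₁ c₂ : k) (hab : ¬ (a = 0 ∧ b = 0)) (h1 : a * c₁ + b * c₂ = 1) :
    asDeg p ((C (c₁ * 0) - C b * X) ^ (m - 1) * (C (c₂ * 0) + C a * X)) ≠
      asDeg p ((C (c₁ * 1) - C b * X) ^ (m - 1) * (C (c₂ * 1) + C a * X)) := by
  have hp : p.Prime := Fact.out
  obtain ⟨M, rfl⟩ : ∃ M, m = M + 2 := ⟨m - 2, by omega⟩
  have hM : 1 ≤ M := by omega
  simp only [mul_zero, mul_one, map_zero, zero_sub, zero_add, show M + 2 - 1 = M + 1 from rfl]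
  have hpm : p ∣ M + 2 := by rw [hm]; exact dvd_pow_self p (by omega)
  have hndvd : ¬ p ∣ (M + 1) := by
    intro hd
    have h01 : p ∣ 1 := by
      have := Nat.dvd_sub hpm hd
      simpa using this
    have h2le := hp.two_le
    have := Nat.le_of_dvd one_pos h01
    omega
  by_cases hb : b = 0
  · -- b = 0 : asDeg f₀ = 0, asDeg f₁ = 1
    subst hb
    have ha : a ≠ 0 := fun h => hab ⟨h, rfl⟩
    have hc₁ : c₁ ≠ 0 := by
      intro h
      rw [h] at h1
      simp at h1
    simp only [map_zero, zero_mul, neg_zero, sub_zero]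
    rw [zero_pow (by omega : M + 1 ≠ 0), zero_mul]
    have hzero : asDeg p (0 : Polynomial k) = 0 := by
      apply Nat.sInf_eq_zero.mpr
      left
      exact ⟨0, by simp [zero_pow hp.ne_zero]⟩
    rw [hzero, asDeg_eq_natDegree]
    · have : ((C c₁ : Polynomial k) ^ (M + 1) * (C c₂ + C a * X)).natDegree = 1 := by
        rw [natDegree_mul (pow_ne_zero _ (by simpa using hc₁)), natDegree_pow, natDegree_C,
          mul_zero, zero_add, add_comm, natDegree_linear ha]
        intro h
        have := congrArg (fun q : Polynomial k => q.coeff 1) h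
        simp [coeff_X] at this
        exact ha this
      rw [this]
      omega
    · intro hd
      have : ((C c₁ : Polynomial k) ^ (M + 1) * (C c₂ + C a * X)).natDegree = 1 := by
        rw [natDegree_mul (pow_ne_zero _ (by simpa using hc₁)), natDegree_pow, natDegree_C,
          mul_zero, zero_add, add_comm, natDegree_linear ha]
        intro h
        have := congrArg (fun q : Polynomial k => q.coeff 1) h
        simp [coeff_X] at this
        exact ha this
      rw [this] at hd
      have h2le := hp.two_le
      have := Nat.le_of_dvd one_pos hd
      omega
  · -- b ≠ 0
    set P : Polynomial k := (C c₁ - C b * X) ^ (M + 1) with hPdef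
    have hlin : (C c₁ - C b * X : Polynomial k).natDegree ≤ 1 := by
      apply (natDegree_sub_le _ _).trans
      have h2 : (C b * X : Polynomial k).natDegree = 1 := natDegree_C_mul_X b hb
      simp [natDegree_C, h2]
    have hPdeg : P.natDegree ≤ M + 1 := by
      apply natDegree_pow_le.trans
      calc (M + 1) * (C c₁ - C b * X : Polynomial k).natDegree ≤ (M + 1) * 1 :=
        Nat.mul_le_mul_left _ hlin
      _ = M + 1 := mul_one _
    have hPtop : P.coeff (M + 2) = 0 := coeff_eq_zero_of_natDegree_lt (by omega)
    have hkey : (C c₁ - C b * X) * P = C (c₁ ^ (M + 2)) - C (b ^ (M + 2)) * X ^ (M + 2) := by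
      have h2 : (C c₁ - C b * X : Polynomial k) * P = (C c₁ - C b * X) ^ (M + 2) :=
        (pow_succ' _ _).symm
      rw [h2, show M + 2 = p ^ e from hm, sub_pow_char_pow, ← hm]
      rw [mul_pow, ← C_pow, ← C_pow]
    have hcoeff : ∀ n : ℕ, ((C c₁ - C b * X) * P).coeff (n + 1)
        = c₁ * P.coeff (n + 1) - b * P.coeff n := by
      intro n
      rw [sub_mul, coeff_sub, coeff_C_mul, mul_assoc, coeff_C_mul, coeff_X_mul]
    have e1 := congrArg (fun q : Polynomial k => q.coeff (M + 2)) hkey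
    rw [show M + 2 = M + 1 + 1 from rfl, hcoeff (M + 1), coeff_sub, coeff_C, coeff_C_mul,
      coeff_X_pow, if_neg (by omega), if_pos rfl, mul_one, zero_sub, hPtop, mul_zero,
      zero_sub, neg_inj] at e1
    -- e1 : b * P.coeff (M + 1) = b ^ (M + 2)
    have hPc1 : P.coeff (M + 1) = b ^ (M + 1) := by
      apply mul_left_cancel₀ hb
      rw [e1, ← pow_succ']
    have e2 := congrArg (fun q : Polynomial k => q.coeff (M + 1)) hkey
    rw [hcoeff M, coeff_sub, coeff_C, coeff_C_mul, coeff_X_pow, if_neg (by omega),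
      if_neg (by omega), mul_zero, sub_zero, hPc1, sub_eq_zero] at e2
    -- e2 : c₁ * b ^ (M + 1) = b * P.coeff M
    have hPc2 : P.coeff M = c₁ * b ^ M := by
      apply mul_left_cancel₀ hb
      rw [← e2, ← mul_assoc, mul_comm b c₁, mul_assoc, ← pow_succ']
    set F₁ : Polynomial k := P * (C c₂ + C a * X) with hF₁def
    have hFcoeff : ∀ n : ℕ, F₁.coeff (n + 1) = c₂ * P.coeff (n + 1) + a * P.coeff n := by
      intro n
      rw [hF₁def, mul_add, coeff_add, mul_comm P (C c₂), coeff_C_mul]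
      congr 1
      rw [show P * (C a * X) = C a * (X * P) by ring, coeff_C_mul, coeff_X_mul]
    have hF1top : F₁.coeff (M + 2) = a * b ^ (M + 1) := by
      rw [show M + 2 = M + 1 + 1 from rfl, hFcoeff (M + 1), hPtop, hPc1, mul_zero, zero_add]
    have hF1sub : F₁.coeff (M + 1) = b ^ M := by
      rw [hFcoeff M, hPc1, hPc2, show c₂ * b ^ (M + 1) + a * (c₁ * b ^ M)
        = (a * c₁ + b * c₂) * b ^ M by ring, h1, one_mul]
    have hF1deg : F₁.natDegree ≤ M + 2 := by
      apply natDegree_mul_le.trans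
      have h3 : (C c₂ + C a * X : Polynomial k).natDegree ≤ 1 := by
        apply (natDegree_add_le _ _).trans
        have h2 : (C a * X : Polynomial k).natDegree ≤ 1 :=
          natDegree_mul_le.trans (by simp [natDegree_C])
        simp [natDegree_C, h2]
      omega
    obtain ⟨w₁, hw₁⟩ := IsAlgClosed.exists_pow_nat_eq (a * b ^ (M + 1)) (n := M + 2) (by omega)
    set g₁ : Polynomial k := C w₁ * X with hg₁def
    set h₁ : Polynomial k := -(∑ j ∈ Finset.range e, g₁ ^ p ^ j) with hh₁def
    have hg₁m : g₁ ^ (M + 2) = C (a * b ^ (M + 1)) * X ^ (M + 2) := by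
      rw [hg₁def, mul_pow, ← C_pow, hw₁]
    have htel : h₁ ^ p - h₁ = g₁ - g₁ ^ (M + 2) := by
      have ht := artinSchreier_telescope p g₁ e
      rw [pow_zero, pow_one, ← hm] at ht
      exact ht
    set F₁' : Polynomial k := F₁ - C (a * b ^ (M + 1)) * X ^ (M + 2) + C w₁ * X with hF₁'def
    have hrep : F₁ + h₁ ^ p - h₁ = F₁' := by
      rw [add_sub_assoc, htel, hg₁m, hF₁'def, hg₁def]
      ring
    have hdegF₁' : F₁'.natDegree = M + 1 := by
      apply le_antisymm
      · rw [natDegree_le_iff_coeff_eq_zero]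
        intro n hn
        rw [hF₁'def]
        simp only [coeff_add, coeff_sub, coeff_C_mul, coeff_X_pow, coeff_X]
        by_cases hn2 : n = M + 2
        · subst hn2
          rw [hF1top, if_pos rfl, if_neg (by omega)]
          ring
        · rw [coeff_eq_zero_of_natDegree_lt (lt_of_le_of_lt hF1deg (by omega)),
            if_neg hn2, if_neg (by omega)]
          ring
      · apply le_natDegree_of_ne_zero
        rw [hF₁'def]
        simp only [coeff_add, coeff_sub, coeff_C_mul, coeff_X_pow, coeff_X]
        rw [hF1sub, if_neg (by omega), if_neg (by omega : ¬ (1:ℕ) = M + 1)]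
        simpa using pow_ne_zero M hb
    have hasF₁ : asDeg p F₁ = M + 1 := by
      calc asDeg p F₁ = asDeg p (F₁ + h₁ ^ p - h₁) := (asDeg_add_artinSchreier p F₁ h₁).symm
      _ = asDeg p F₁' := by rw [hrep]
      _ = M + 1 := by
          rw [asDeg_eq_natDegree p _ (by rw [hdegF₁']; exact hndvd), hdegF₁']
    -- the fiber at 0
    obtain ⟨w₀, hw₀⟩ := IsAlgClosed.exists_pow_nat_eq ((-b) ^ (M + 1) * a) (n := M + 2) (by omega)
    set g₀ : Polynomial k := C w₀ * X with hg₀def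
    set h₀ : Polynomial k := -(∑ j ∈ Finset.range e, g₀ ^ p ^ j) with hh₀def
    have hg₀m : g₀ ^ (M + 2) = C ((-b) ^ (M + 1) * a) * X ^ (M + 2) := by
      rw [hg₀def, mul_pow, ← C_pow, hw₀]
    have htel0 : h₀ ^ p - h₀ = g₀ - g₀ ^ (M + 2) := by
      have ht := artinSchreier_telescope p g₀ e
      rw [pow_zero, pow_one, ← hm] at ht
      exact ht
    have hF0 : ((-(C b * X) : Polynomial k)) ^ (M + 1) * (C a * X)
        = C ((-b) ^ (M + 1) * a) * X ^ (M + 2) := by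
      have h4 : (-(C b * X) : Polynomial k) = C (-b) * X := by
        rw [map_neg, neg_mul]
      rw [h4, mul_pow, ← C_pow]
      calc C ((-b) ^ (M + 1)) * X ^ (M + 1) * (C a * X)
          = C ((-b) ^ (M + 1) * a) * (X ^ (M + 1) * X) := by rw [C_mul]; ring
      _ = C ((-b) ^ (M + 1) * a) * X ^ (M + 2) := by rw [← pow_succ]
    have hrep0 : (-(C b * X) : Polynomial k) ^ (M + 1) * (C a * X) + h₀ ^ p - h₀
        = C w₀ * X := by
      rw [hF0, add_sub_assoc, htel0, hg₀m, hg₀def]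
      ring
    have hasF₀ : asDeg p ((-(C b * X) : Polynomial k) ^ (M + 1) * (C a * X)) ≤ 1 := by
      have hmem : ((-(C b * X) : Polynomial k) ^ (M + 1) * (C a * X) + h₀ ^ p - h₀).natDegree
          = (C w₀ * X : Polynomial k).natDegree := by rw [hrep0]
      calc asDeg p ((-(C b * X) : Polynomial k) ^ (M + 1) * (C a * X))
          ≤ (C w₀ * X : Polynomial k).natDegree := Nat.sInf_le ⟨h₀, hmem⟩
      _ ≤ 1 := natDegree_mul_le.trans (by simp [natDegree_C])
    rw [hasF₁]
    intro hcontra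
    rw [hcontra] at hasF₀
    omega
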